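/- Under the iterated Cauchy–Schwarz bound above: if R is even, q > R, n ≥ 1 is chosen so that R + 2^n (q - R) ≥ M with ∫_{R^d} |C(x)|^M dx < ∞, then ṽ_{q,t}/v_{R,t} ≤ (Vol(D) ∫_{R^d} |C(x)|^M dx)^{1/2^n} · v_{R,t}^{-1/2^n}, uniformly in q > R. In particular, if v_{R,t} → ∞ as t → ∞, then sup_{q > R} Var(Y_{q,t})/ (q! / R! · Var(Y_{R,t})) → 0 in the sense that ṽ_{q,t}/v_{R,t} → 0 uniformly in q. -/

import Mathlib

open MeasureTheory Filter
open scoped ENNReal Topology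

/-- Iterated Cauchy–Schwarz bound: if `R` is even, `R + 2^n ≥ M` and `∫ |C|^M < ∞`, then
`ṽ_{q,t}/v_{R,t} ≤ (Vol(D) ∫ |C|^M)^{1/2^n} v_{R,t}^{-1/2^n}` uniformly in `q > R`;
consequently, if `v_{R,t} → ∞`, then `ṽ_{q,t}/v_{R,t} → 0` uniformly in `q > R`. -/
theorem stmt_10 {d : ℕ} (hd : 1 ≤ d)
    (C : EuclideanSpace ℝ (Fin d) → ℝ) (hCm : Measurable C) (hC1 : ∀ x, |C x| ≤ 1)
    (D : Set (EuclideanSpace ℝ (Fin d))) (hD : IsCompact D) (hvol : 0 < volume D)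
    (R : ℕ) (hR : Even R) (hR1 : 1 ≤ R)
    (M n : ℕ) (hn : 1 ≤ n) (hM : R + 1 ≤ M) (hnM : M ≤ R + 2 ^ n)
    (hCM : Integrable fun x => |C x| ^ M)
    (g : EuclideanSpace ℝ (Fin d) → ℝ)
    (hg : ∀ x, g x = (volume (D ∩ ((fun y => x + y) '' D))).toReal)
    (vt : ℕ → ℝ → ℝ)
    (hvt : ∀ p t, vt p t = ∫ z in {z : EuclideanSpace ℝ (Fin d) | ‖z‖ ≤ Metric.diam D * t},
      |C z| ^ p * g (t⁻¹ • z))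
    (v : ℝ → ℝ)
    (hv : ∀ t, v t = ∫ z in {z : EuclideanSpace ℝ (Fin d) | ‖z‖ ≤ Metric.diam D * t},
      C z ^ R * g (t⁻¹ • z))
    (hvpos : ∀ t > (0 : ℝ), 0 < v t) :
    (∀ t > (0 : ℝ), ∀ q, R < q →
      vt q t / v t ≤
        ((volume D).toReal * ∫ x, |C x| ^ M) ^ ((1 : ℝ) / 2 ^ n) *
          (v t) ^ (-(1 : ℝ) / 2 ^ n)) ∧
    (Tendsto v atTop atTop →
      ∀ ε > (0 : ℝ), ∃ T : ℝ, ∀ t ≥ T, ∀ q, R < q → vt q t / v t < ε) := by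
  classical
  have hDm : MeasurableSet D := hD.isClosed.measurableSet
  have hDfin : volume D < ∞ := hD.measure_lt_top
  -- measurability of g
  have hgm : Measurable g := by
    have hset : ∀ x : (EuclideanSpace ℝ (Fin d)), D ∩ ((fun y => x + y) '' D) =
        Prod.mk x ⁻¹' {p : (EuclideanSpace ℝ (Fin d)) × (EuclideanSpace ℝ (Fin d)) | p.2 ∈ D ∧ p.2 - p.1 ∈ D} := by
      intro x
      ext y
      simp only [Set.mem_inter_iff, Set.mem_image, Set.mem_preimage, Set.mem_setOf_eq]
      constructor
      · rintro ⟨hy, z, hz, rfl⟩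
        exact ⟨hy, by simpa using hz⟩
      · rintro ⟨hy, hz⟩
        exact ⟨hy, y - x, hz, by abel⟩
    have hA : MeasurableSet {p : (EuclideanSpace ℝ (Fin d)) × (EuclideanSpace ℝ (Fin d)) | p.2 ∈ D ∧ p.2 - p.1 ∈ D} :=
      (measurable_snd hDm).inter ((measurable_snd.sub measurable_fst) hDm)
    have hmeas := measurable_measure_prodMk_left (ν := (volume : Measure (EuclideanSpace ℝ (Fin d)))) hA
    have : g = fun x => (volume (Prod.mk x ⁻¹' {p : (EuclideanSpace ℝ (Fin d)) × (EuclideanSpace ℝ (Fin d)) | p.2 ∈ D ∧ p.2 - p.1 ∈ D})).toReal := by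
      funext x; rw [hg x, hset x]
    rw [this]
    exact hmeas.ennreal_toReal
  have hgofReal : ∀ x, ENNReal.ofReal (g x) ≤ volume D := by
    intro x
    rw [hg x, ENNReal.ofReal_toReal
      (((measure_mono Set.inter_subset_left).trans_lt hDfin).ne)]
    exact measure_mono Set.inter_subset_left
  -- the lintegral of |C|^M
  set I : ℝ≥0∞ := ∫⁻ x, ENNReal.ofReal |C x| ^ (M : ℝ) with hI
  have hIeq : ∀ x : (EuclideanSpace ℝ (Fin d)), ENNReal.ofReal |C x| ^ (M : ℝ) = ENNReal.ofReal (|C x| ^ M) := by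
    intro x
    rw [ENNReal.ofReal_pow (abs_nonneg _), ← ENNReal.rpow_natCast]
  have hIfin : I ≠ ∞ := by
    have h1 := hCM.hasFiniteIntegral
    rw [hasFiniteIntegral_iff_norm] at h1
    rw [hI]
    refine (lt_of_le_of_lt (le_of_eq ?_) h1).ne
    apply lintegral_congr
    intro x
    rw [hIeq x]
    congr 1
    rw [Real.norm_eq_abs, abs_pow, abs_abs]
  have hItoReal : (∫ x, |C x| ^ M) = I.toReal := by
    rw [integral_eq_lintegral_of_nonneg_ae (ae_of_all _ fun x => pow_nonneg (abs_nonneg _) M)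
      ((hCm.abs.pow_const M)).aestronglyMeasurable]
    congr 1
    exact lintegral_congr fun x => (hIeq x).symm
  have hA0 : 0 ≤ (volume D).toReal * ∫ x, |C x| ^ M :=
    mul_nonneg ENNReal.toReal_nonneg (integral_nonneg fun x => pow_nonneg (abs_nonneg _) _)
  have hεeq : ((1 : ℝ) / 2) ^ n = 1 / 2 ^ n := by rw [div_pow, one_pow]
  -- main uniform bound
  have key : ∀ t > (0 : ℝ), ∀ q, R < q →
      vt q t / v t ≤
        ((volume D).toReal * ∫ x, |C x| ^ M) ^ ((1 : ℝ) / 2 ^ n) *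
          (v t) ^ (-(1 : ℝ) / 2 ^ n) := by
    intro t ht q hq
    set S : Set (EuclideanSpace ℝ (Fin d)) := Metric.closedBall 0 (Metric.diam D * t) with hSdef
    have hSset : {z : (EuclideanSpace ℝ (Fin d)) | ‖z‖ ≤ Metric.diam D * t} = S := by
      ext z; simp [hSdef, Metric.mem_closedBall, dist_zero_right]
    have hSfin : volume S ≠ ∞ := (isCompact_closedBall _ _).measure_lt_top.ne
    set μ : Measure (EuclideanSpace ℝ (Fin d)) := volume.restrict S with hμ
    set oC : (EuclideanSpace ℝ (Fin d)) → ℝ≥0∞ := fun z => ENNReal.ofReal |C z| with hoC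
    have hoCm : Measurable oC := ENNReal.measurable_ofReal.comp hCm.abs
    have hoC1 : ∀ z, oC z ≤ 1 := fun z => ENNReal.ofReal_le_one.2 (hC1 z)
    set G : (EuclideanSpace ℝ (Fin d)) → ℝ≥0∞ := fun z => ENNReal.ofReal (g (t⁻¹ • z)) with hG
    have hGm : Measurable G :=
      ENNReal.measurable_ofReal.comp (hgm.comp (measurable_const_smul t⁻¹))
    have hGle : ∀ z, G z ≤ volume D := fun z => hgofReal _
    set F : ℝ → ℝ≥0∞ := fun a => ∫⁻ z, oC z ^ a * G z ∂μ with hF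
    have hFm : ∀ a : ℝ, Measurable fun z => oC z ^ a * G z :=
      fun a => (hoCm.pow_const a).mul hGm
    have hFle : ∀ a : ℝ, 0 ≤ a → F a ≤ volume D * volume S := by
      intro a ha
      calc F a ≤ ∫⁻ _, volume D ∂μ := by
            apply lintegral_mono
            intro z
            calc oC z ^ a * G z ≤ 1 * volume D :=
                  mul_le_mul' (ENNReal.rpow_le_one (hoC1 z) ha) (hGle z)
            _ = volume D := one_mul _
      _ = volume D * volume S := by
            rw [lintegral_const, hμ, Measure.restrict_apply_univ]
    have hFfin : ∀ a : ℝ, 0 ≤ a → F a ≠ ∞ :=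
      fun a ha => ((hFle a ha).trans_lt
        (ENNReal.mul_lt_top hDfin hSfin.lt_top)).ne
    -- vt p t in terms of F
    have hvteq : ∀ p : ℕ, vt p t = (F p).toReal := by
      intro p
      rw [hvt p t, hSset]
      have h1 : (0 : EuclideanSpace ℝ (Fin d) → ℝ) ≤ᵐ[volume.restrict S]
          fun z => |C z| ^ p * g (t⁻¹ • z) :=
        ae_of_all _ fun z => mul_nonneg (pow_nonneg (abs_nonneg _) _)
          (by rw [hg]; exact ENNReal.toReal_nonneg)
      have h2 : AEStronglyMeasurable (fun z => |C z| ^ p * g (t⁻¹ • z))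
          (volume.restrict S) :=
        ((hCm.abs.pow_const p).mul (hgm.comp (measurable_const_smul t⁻¹))).aestronglyMeasurable
      rw [integral_eq_lintegral_of_nonneg_ae h1 h2]
      congr 1
      apply lintegral_congr
      intro z
      rw [ENNReal.ofReal_mul (pow_nonneg (abs_nonneg _) _),
        ENNReal.ofReal_pow (abs_nonneg _), ← ENNReal.rpow_natCast]
    have hveq : v t = vt R t := by
      rw [hv t, hvt R t]
      simp_rw [hR.pow_abs]
    have hvF : v t = (F R).toReal := by rw [hveq, hvteq R]
    have hv0 : 0 < v t := hvpos t ht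
    have hFR0 : F (R : ℝ) ≠ 0 := by
      intro h0
      rw [hvF, h0, ENNReal.toReal_zero] at hv0
      exact lt_irrefl _ hv0
    -- Cauchy–Schwarz step
    have hCS : ∀ a b : ℝ, 0 ≤ a → 0 ≤ b →
        F ((a + b) / 2) ≤ F a ^ ((1 : ℝ)/2) * F b ^ ((1 : ℝ)/2) := by
      intro a b ha hb
      have h2 : Real.HolderConjugate 2 2 := Real.holderConjugate_iff.mpr ⟨one_lt_two, by norm_num⟩
      have hmf : AEMeasurable (fun z => oC z ^ (a/2) * G z ^ ((1:ℝ)/2)) μ :=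
        ((hoCm.pow_const _).mul (hGm.pow_const _)).aemeasurable
      have hmg : AEMeasurable (fun z => oC z ^ (b/2) * G z ^ ((1:ℝ)/2)) μ :=
        ((hoCm.pow_const _).mul (hGm.pow_const _)).aemeasurable
      have hH := ENNReal.lintegral_mul_le_Lp_mul_Lq μ h2 hmf hmg
      have hleft : ∫⁻ z, ((fun z => oC z ^ (a/2) * G z ^ ((1:ℝ)/2)) *
          (fun z => oC z ^ (b/2) * G z ^ ((1:ℝ)/2))) z ∂μ = F ((a + b) / 2) := by
        apply lintegral_congr
        intro z
        simp only [Pi.mul_apply]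
        rw [mul_mul_mul_comm, ← ENNReal.rpow_add_of_nonneg _ _ (by positivity) (by positivity),
          ← ENNReal.rpow_add_of_nonneg _ _ (by positivity) (by positivity)]
        norm_num
        rw [← add_div]
      have hsq : ∀ c : ℝ, 0 ≤ c → ∀ z : (EuclideanSpace ℝ (Fin d)),
          (oC z ^ (c/2) * G z ^ ((1:ℝ)/2)) ^ (2:ℝ) = oC z ^ c * G z := by
        intro c hc z
        rw [ENNReal.mul_rpow_of_nonneg _ _ (by norm_num), ← ENNReal.rpow_mul,
          ← ENNReal.rpow_mul]
        norm_num
      calc F ((a + b) / 2) = _ := hleft.symm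
      _ ≤ _ := hH
      _ = F a ^ ((1:ℝ)/2) * F b ^ ((1:ℝ)/2) := by
          congr 1
          · congr 1
            exact lintegral_congr (hsq a ha)
          · congr 1
            exact lintegral_congr (hsq b hb)
    -- iterated bound
    have hIter : ∀ k : ℕ, ∀ b : ℝ, 0 ≤ b →
        F (R + b) ≤ F (R : ℝ) ^ (1 - ((1:ℝ)/2) ^ k) * F (R + 2 ^ k * b) ^ (((1:ℝ)/2) ^ k) := by
      intro k
      induction k with
      | zero =>
        intro b hb
        simp [ENNReal.rpow_zero, ENNReal.rpow_one]
      | succ k ih =>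
        intro b hb
        have h1 : F ((R : ℝ) + b) ≤ F (R : ℝ) ^ ((1:ℝ)/2) * F (R + 2 * b) ^ ((1:ℝ)/2) := by
          have := hCS (R : ℝ) ((R : ℝ) + 2 * b) (Nat.cast_nonneg R) (by positivity)
          have harg : ((R : ℝ) + ((R : ℝ) + 2 * b)) / 2 = (R : ℝ) + b := by ring
          rwa [harg] at this
        calc F ((R : ℝ) + b) ≤ F (R : ℝ) ^ ((1:ℝ)/2) * F ((R : ℝ) + 2 * b) ^ ((1:ℝ)/2) := h1
        _ ≤ F (R : ℝ) ^ ((1:ℝ)/2) *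
            (F (R : ℝ) ^ (1 - ((1:ℝ)/2) ^ k) *
              F ((R : ℝ) + 2 ^ k * (2 * b)) ^ (((1:ℝ)/2) ^ k)) ^ ((1:ℝ)/2) := by
            exact mul_le_mul' le_rfl
              (ENNReal.rpow_le_rpow (ih (2 * b) (by positivity)) (by norm_num))
        _ = F (R : ℝ) ^ (1 - ((1:ℝ)/2) ^ (k + 1)) *
              F ((R : ℝ) + 2 ^ (k + 1) * b) ^ (((1:ℝ)/2) ^ (k + 1)) := by
            rw [ENNReal.mul_rpow_of_nonneg _ _ (by positivity), ← ENNReal.rpow_mul,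
              ← ENNReal.rpow_mul, ← mul_assoc,
              ← ENNReal.rpow_add_of_nonneg _ _ (by norm_num)
                (mul_nonneg (sub_nonneg.2 (pow_le_one₀ (by norm_num) (by norm_num)))
                  (by norm_num))]
            have e1 : (1:ℝ)/2 + (1 - ((1:ℝ)/2) ^ k) * ((1:ℝ)/2) = 1 - ((1:ℝ)/2) ^ (k+1) := by
              rw [pow_succ]; ring
            have e2 : ((1:ℝ)/2) ^ k * ((1:ℝ)/2) = ((1:ℝ)/2) ^ (k+1) := by
              rw [pow_succ]
            have e3 : (R : ℝ) + 2 ^ k * (2 * b) = (R : ℝ) + 2 ^ (k+1) * b := by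
              rw [pow_succ]; ring
            rw [e1, e2, e3]
    -- bound for large exponents
    have hbound : ∀ a : ℝ, (M : ℝ) ≤ a → F a ≤ volume D * I := by
      intro a hMa
      calc F a ≤ ∫⁻ z, oC z ^ (M : ℝ) * volume D ∂μ := by
            apply lintegral_mono
            intro z
            exact mul_le_mul' (ENNReal.rpow_le_rpow_of_exponent_ge (hoC1 z) hMa) (hGle z)
      _ = volume D * ∫⁻ z, oC z ^ (M : ℝ) ∂μ := by
            rw [lintegral_mul_const _ (hoCm.pow_const _), mul_comm]
      _ ≤ volume D * I := by
            gcongr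
            rw [hI]
            exact lintegral_mono' Measure.restrict_le_self le_rfl
    -- assemble
    set ε : ℝ := ((1:ℝ)/2) ^ n with hεdef
    have hε : 0 < ε := by positivity
    have hε1 : ε ≤ 1 := pow_le_one₀ (by norm_num) (by norm_num)
    set b : ℝ := (q : ℝ) - R with hb
    have hb1 : 1 ≤ b := by
      rw [hb]
      have : (R : ℝ) + 1 ≤ q := by exact_mod_cast Nat.succ_le_of_lt hq
      linarith
    have hqb : (q : ℝ) = (R : ℝ) + b := by rw [hb]; ring
    have hMa : (M : ℝ) ≤ (R : ℝ) + 2 ^ n * b := by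
      have h1 : (M : ℝ) ≤ (R : ℝ) + 2 ^ n := by exact_mod_cast hnM
      have h2 : (2:ℝ) ^ n ≤ 2 ^ n * b := le_mul_of_one_le_right (by positivity) hb1
      linarith
    have hmain : F (q : ℝ) ≤ F (R : ℝ) ^ (1 - ε) * (volume D * I) ^ ε := by
      rw [hqb]
      calc F ((R : ℝ) + b) ≤ F (R : ℝ) ^ (1 - ε) * F ((R : ℝ) + 2 ^ n * b) ^ ε :=
            hIter n b (by linarith)
      _ ≤ F (R : ℝ) ^ (1 - ε) * (volume D * I) ^ ε := by
            gcongr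
            exact hbound _ hMa
    have hDIfin : volume D * I ≠ ∞ := ENNReal.mul_ne_top hDfin.ne hIfin
    have hrhsfin : F (R : ℝ) ^ (1 - ε) * (volume D * I) ^ ε ≠ ∞ :=
      ENNReal.mul_ne_top
        (ENNReal.rpow_ne_top_of_nonneg (by linarith) (hFfin _ (Nat.cast_nonneg R)))
        (ENNReal.rpow_ne_top_of_nonneg hε.le hDIfin)
    have htreal : vt q t ≤ (v t) ^ (1 - ε) * ((volume D).toReal * ∫ x, |C x| ^ M) ^ ε := by
      rw [hvteq q, hvF, hItoReal]
      calc (F (q : ℝ)).toReal ≤ (F (R : ℝ) ^ (1 - ε) * (volume D * I) ^ ε).toReal :=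
            ENNReal.toReal_mono hrhsfin hmain
      _ = (F (R : ℝ)).toReal ^ (1 - ε) * ((volume D).toReal * I.toReal) ^ ε := by
            rw [ENNReal.toReal_mul, ← ENNReal.toReal_rpow, ← ENNReal.toReal_rpow,
              ENNReal.toReal_mul]
    -- divide
    have hAε : ((volume D).toReal * ∫ x, |C x| ^ M) ^ ((1 : ℝ) / 2 ^ n) =
        ((volume D).toReal * ∫ x, |C x| ^ M) ^ ε := by rw [hεeq]
    have hvε : (v t) ^ (-(1 : ℝ) / 2 ^ n) = (v t) ^ (-ε) := by
      rw [hεeq, neg_div]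
    rw [hAε, hvε]
    have hsplit : (v t) ^ (1 - ε) = v t * (v t) ^ (-ε) := by
      have h1 := Real.rpow_add hv0 1 (-ε)
      have h2 : (1 : ℝ) + -ε = 1 - ε := by ring
      rw [h2] at h1
      rw [h1, Real.rpow_one]
    calc vt q t / v t ≤ ((v t) ^ (1 - ε) * ((volume D).toReal * ∫ x, |C x| ^ M) ^ ε) / v t :=
          (div_le_div_iff_of_pos_right hv0).mpr htreal
    _ = ((volume D).toReal * ∫ x, |C x| ^ M) ^ ε * (v t) ^ (-ε) := by
          rw [hsplit]
          field_simp
  refine ⟨key, ?_⟩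
  -- second part
  intro htend ε' hε'
  set c : ℝ := ((volume D).toReal * ∫ x, |C x| ^ M) ^ ((1 : ℝ) / 2 ^ n) with hc
  have hexp : (0:ℝ) < 1 / 2 ^ n := by positivity
  have h0 : Tendsto (fun t => c * (v t) ^ (-(1 : ℝ) / 2 ^ n)) atTop (𝓝 0) := by
    have h1 : Tendsto (fun x : ℝ => x ^ (-(1 / 2 ^ n) : ℝ)) atTop (𝓝 0) :=
      tendsto_rpow_neg_atTop hexp
    have h2 := (h1.comp htend).const_mul c
    rw [mul_zero] at h2
    simpa [neg_div, Function.comp] using h2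
  have hev := h0.eventually (gt_mem_nhds hε')
  rw [eventually_atTop] at hev
  obtain ⟨T₀, hT₀⟩ := hev
  refine ⟨max T₀ 1, fun t htT q hq => ?_⟩
  have ht : (0:ℝ) < t := lt_of_lt_of_le one_pos ((le_max_right _ _).trans htT)
  exact lt_of_le_of_lt (key t ht q hq) (hT₀ t ((le_max_left _ _).trans htT))
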